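/- Suppose x is a bounded real sequence whose set of sub-limits S(x) = {a_1, a_2, …, a_m} is finite (with the a_j pairwise distinct), and suppose the weight w(a_j) exists for each j. Then x is almost convergent, and for every Banach limit L, L(x) = ∑_{j=1}^m a_j·w(a_j). -/

import Mathlib

open Filter

/-- A bounded real sequence. -/
def IsBddSeq (x : ℕ → ℝ) : Prop := ∃ C : ℝ, ∀ n, |x n| ≤ C

/-- The sup norm of a (bounded) real sequence. -/
noncomputable def supNorm (x : ℕ → ℝ) : ℝ := ⨆ n, |x n|

/-- A Banach limit: a linear functional on the space of bounded real sequences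
(extended arbitrarily to all sequences) that is positive, shift-invariant,
and sends the constant-one sequence to `1`. -/
def IsBanachLimit (L : (ℕ → ℝ) → ℝ) : Prop :=
  (∀ x y : ℕ → ℝ, IsBddSeq x → IsBddSeq y → L (x + y) = L x + L y) ∧
  (∀ (c : ℝ) (x : ℕ → ℝ), IsBddSeq x → L (c • x) = c * L x) ∧
  (∀ x : ℕ → ℝ, IsBddSeq x → (∀ n, 0 ≤ x n) → 0 ≤ L x) ∧
  (∀ x : ℕ → ℝ, IsBddSeq x → L (fun n => x (n + 1)) = L x) ∧
  L (fun _ => 1) = 1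

/-- A bounded sequence is almost convergent if all Banach limits agree on it. -/
def AlmostConvergent (x : ℕ → ℝ) : Prop :=
  ∃ c : ℝ, ∀ L : (ℕ → ℝ) → ℝ, IsBanachLimit L → L x = c

/-- `a` is a sub-limit of `x` if some subsequence of `x` converges to `a`. -/
def IsSubLimit (x : ℕ → ℝ) (a : ℝ) : Prop :=
  ∃ n : ℕ → ℕ, StrictMono n ∧ Tendsto (fun k => x (n k)) atTop (nhds a)

/-- The set of all sub-limits of `x`. -/
def subLimitSet (x : ℕ → ℝ) : Set ℝ := {a | IsSubLimit x a}

/-- `A({k : i ≤ n_k ≤ i + len - 1})`: the number of indices of the subsequence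
given by `n` falling in the window `[i, i + len - 1]`. -/
noncomputable def windowCount (n : ℕ → ℕ) (i len : ℕ) : ℕ :=
  {k : ℕ | i ≤ n k ∧ n k < i + len}.ncard

/-- Upper weight of a subsequence with index map `n`. -/
noncomputable def upperWeight (n : ℕ → ℕ) : ℝ :=
  limsup (fun len : ℕ => ⨆ i : ℕ, (windowCount n i len : ℝ) / len) atTop

/-- Lower weight of a subsequence with index map `n`. -/
noncomputable def lowerWeight (n : ℕ → ℕ) : ℝ :=
  liminf (fun len : ℕ => ⨅ i : ℕ, (windowCount n i len : ℝ) / len) atTop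

/-- `n` indexes an essential subsequence of `x` for the sub-limit `a`:
it converges to `a` and every subsequence of `x` converging to `a` has all
but finitely many of its indices among the `n k`. -/
def IsEssentialSubseq (x : ℕ → ℝ) (a : ℝ) (n : ℕ → ℕ) : Prop :=
  StrictMono n ∧ Tendsto (fun k => x (n k)) atTop (nhds a) ∧
  ∀ m : ℕ → ℕ, StrictMono m → Tendsto (fun t => x (m t)) atTop (nhds a) →
    {t : ℕ | ¬ ∃ k, n k = m t}.Finite

/-- The weight `w(a)` of a sub-limit `a` of `x` exists and equals `w`:
some essential subsequence of `a` has upper weight and lower weight both `w`. -/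
def HasSubLimitWeight (x : ℕ → ℝ) (a : ℝ) (w : ℝ) : Prop :=
  ∃ n : ℕ → ℕ, IsEssentialSubseq x a n ∧ upperWeight n = w ∧ lowerWeight n = w

/-- `A({k : x(k+i) ∈ S, k = 0, …, len-1})`. -/
noncomputable def seqCount (x : ℕ → ℝ) (S : Set ℝ) (i len : ℕ) : ℕ :=
  {k : ℕ | k < len ∧ x (k + i) ∈ S}.ncard

/-- The weight of `x` with respect to `S` exists and equals `w`:
`A({k : x(k+i) ∈ S, k = 0,…,n-1})/n → w` as `n → ∞`, uniformly in `i`. -/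
def HasSetWeight (x : ℕ → ℝ) (S : Set ℝ) (w : ℝ) : Prop :=
  ∀ ε : ℝ, 0 < ε → ∃ N : ℕ, ∀ n ≥ N, ∀ i : ℕ,
    |(seqCount x S i n : ℝ) / n - w| < ε

/-- `x` is properly distributed: every Borel subset of `[-‖x‖∞, ‖x‖∞]`
has a weight with respect to `x`. -/
def ProperlyDistributed (x : ℕ → ℝ) : Prop :=
  ∀ S : Set ℝ, MeasurableSet S → S ⊆ Set.Icc (-(supNorm x)) (supNorm x) →
    ∃ w : ℝ, HasSetWeight x S w

/-- `s` is simply distributed: it takes finitely many values, and each value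
has a weight with respect to `s`. -/
def SimplyDistributed (s : ℕ → ℝ) : Prop :=
  (Set.range s).Finite ∧ ∀ a ∈ Set.range s, ∃ w : ℝ, HasSetWeight s {a} w

/-! ### Auxiliary lemmas -/

lemma isBddSeq_const (c : ℝ) : IsBddSeq (fun _ => c) := ⟨|c|, fun _ => le_rfl⟩

lemma isBddSeq_add {x y : ℕ → ℝ} (hx : IsBddSeq x) (hy : IsBddSeq y) :
    IsBddSeq (fun n => x n + y n) := by
  obtain ⟨C, hC⟩ := hx; obtain ⟨D, hD⟩ := hy
  exact ⟨C + D, fun n => (abs_add_le _ _).trans (add_le_add (hC n) (hD n))⟩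

lemma isBddSeq_smul (c : ℝ) {x : ℕ → ℝ} (hx : IsBddSeq x) :
    IsBddSeq (fun n => c * x n) := by
  obtain ⟨C, hC⟩ := hx
  exact ⟨|c| * C, fun n => by
    rw [abs_mul]; exact mul_le_mul_of_nonneg_left (hC n) (abs_nonneg c)⟩

lemma isBddSeq_sub {x y : ℕ → ℝ} (hx : IsBddSeq x) (hy : IsBddSeq y) :
    IsBddSeq (fun n => x n - y n) := by
  obtain ⟨C, hC⟩ := hx; obtain ⟨D, hD⟩ := hy
  refine ⟨C + D, fun n => ?_⟩
  calc |x n - y n| ≤ |x n| + |y n| := abs_sub _ _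
    _ ≤ C + D := add_le_add (hC n) (hD n)

lemma isBddSeq_shift {x : ℕ → ℝ} (hx : IsBddSeq x) (k : ℕ) :
    IsBddSeq (fun n => x (n + k)) := by
  obtain ⟨C, hC⟩ := hx
  exact ⟨C, fun n => hC _⟩

lemma isBddSeq_sum {ι : Type*} (s : Finset ι) (f : ι → ℕ → ℝ)
    (hf : ∀ j ∈ s, IsBddSeq (f j)) :
    IsBddSeq (fun n => ∑ j ∈ s, f j n) := by
  classical
  induction s using Finset.induction_on with
  | empty => simpa using isBddSeq_const 0
  | insert i s hni ih =>
    simp only [Finset.sum_insert hni]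
    exact isBddSeq_add (hf i (Finset.mem_insert_self i s))
      (ih fun j hj => hf j (Finset.mem_insert_of_mem hj))

section BL

variable {L : (ℕ → ℝ) → ℝ} (hL : IsBanachLimit L)

include hL

lemma BL_add {x y : ℕ → ℝ} (hx : IsBddSeq x) (hy : IsBddSeq y) :
    L (fun n => x n + y n) = L x + L y := hL.1 x y hx hy

lemma BL_smul (c : ℝ) {x : ℕ → ℝ} (hx : IsBddSeq x) :
    L (fun n => c * x n) = c * L x := hL.2.1 c x hx

lemma BL_const (c : ℝ) : L (fun _ => c) = c := by
  have h := hL.2.1 c (fun _ => 1) (isBddSeq_const 1)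
  have : (c • fun _ : ℕ => (1 : ℝ)) = fun _ : ℕ => c := by
    funext n; simp
  rw [this] at h
  rw [h, hL.2.2.2.2, mul_one]

lemma BL_mono {x y : ℕ → ℝ} (hx : IsBddSeq x) (hy : IsBddSeq y)
    (h : ∀ n, x n ≤ y n) : L x ≤ L y := by
  have hd : IsBddSeq (fun n => y n - x n) := isBddSeq_sub hy hx
  have h1 : L (fun n => x n + (y n - x n)) = L x + L (fun n => y n - x n) :=
    hL.1 x _ hx hd
  have h2 : (fun n => x n + (y n - x n)) = y := by funext n; ring
  rw [h2] at h1
  have h3 : 0 ≤ L (fun n => y n - x n) :=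
    hL.2.2.1 _ hd fun n => sub_nonneg.2 (h n)
  linarith

lemma BL_le_const {x : ℕ → ℝ} (hx : IsBddSeq x) {c : ℝ} (h : ∀ n, x n ≤ c) :
    L x ≤ c := by
  have := BL_mono hL hx (isBddSeq_const c) h
  rwa [BL_const hL] at this

lemma BL_const_le {x : ℕ → ℝ} (hx : IsBddSeq x) {c : ℝ} (h : ∀ n, c ≤ x n) :
    c ≤ L x := by
  have := BL_mono hL (isBddSeq_const c) hx h
  rwa [BL_const hL] at this

lemma BL_shift {x : ℕ → ℝ} (hx : IsBddSeq x) (k : ℕ) :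
    L (fun n => x (n + k)) = L x := by
  induction k with
  | zero => simp
  | succ t ih =>
    have h1 : (fun n => x (n + (t + 1))) = fun n => (fun q => x (q + t)) (n + 1) := by
      funext n; congr 1; omega
    rw [h1, hL.2.2.2.1 _ (isBddSeq_shift hx t), ih]

lemma BL_abs_le {x : ℕ → ℝ} (hx : IsBddSeq x) {c : ℝ} (h : ∀ n, |x n| ≤ c) :
    |L x| ≤ c := by
  rw [abs_le]
  constructor
  · have := BL_const_le hL hx (c := -c) fun n => (abs_le.1 (h n)).1
    linarith
  · exact BL_le_const hL hx fun n => (abs_le.1 (h n)).2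

/-- A Banach limit vanishes on sequences that are eventually small. -/
lemma BL_zero_of_small {x : ℕ → ℝ} (hx : IsBddSeq x)
    (h : ∀ ε : ℝ, 0 < ε → ∃ N : ℕ, ∀ q ≥ N, |x q| ≤ ε) : L x = 0 := by
  have key : ∀ ε : ℝ, 0 < ε → |L x| ≤ ε := by
    intro ε hε
    obtain ⟨N, hN⟩ := h ε hε
    have h1 : L (fun n => x (n + N)) = L x := BL_shift hL hx N
    rw [← h1]
    exact BL_abs_le hL (isBddSeq_shift hx N) fun n => hN (n + N) (Nat.le_add_left _ _)
  by_contra hne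
  have h0 : 0 < |L x| := abs_pos.2 hne
  have := key (|L x| / 2) (by linarith)
  linarith

lemma BL_sum {ι : Type*} (s : Finset ι) (f : ι → ℕ → ℝ)
    (hf : ∀ j ∈ s, IsBddSeq (f j)) :
    L (fun n => ∑ j ∈ s, f j n) = ∑ j ∈ s, L (f j) := by
  classical
  induction s using Finset.induction_on with
  | empty => simpa using BL_const hL 0
  | insert i s hni ih =>
    simp only [Finset.sum_insert hni]
    rw [BL_add hL (hf i (Finset.mem_insert_self i s))
      (isBddSeq_sum s f fun j hj => hf j (Finset.mem_insert_of_mem hj)),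
      ih fun j hj => hf j (Finset.mem_insert_of_mem hj)]

lemma BL_window_sum {x : ℕ → ℝ} (hx : IsBddSeq x) (len : ℕ) :
    L (fun i => ∑ k ∈ Finset.range len, x (i + k)) = len * L x := by
  induction len with
  | zero => simpa using BL_const hL 0
  | succ t ih =>
    have h1 : (fun i => ∑ k ∈ Finset.range (t + 1), x (i + k))
        = fun i => (fun q => ∑ k ∈ Finset.range t, x (q + k)) i + (fun q => x (q + t)) i := by
      funext i; simp [Finset.sum_range_succ]
    rw [h1, BL_add hL (isBddSeq_sum _ _ fun k _ => isBddSeq_shift hx k)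
        (isBddSeq_shift hx t), ih, BL_shift hL hx t]
    push_cast; ring

end BL

/-- Indicator sequence of the range of `n`. -/
noncomputable def chi (n : ℕ → ℕ) : ℕ → ℝ := fun q =>
  letI := Classical.propDecidable
  if ∃ k, n k = q then 1 else 0

lemma chi_bdd (n : ℕ → ℕ) : IsBddSeq (chi n) := by
  refine ⟨1, fun q => ?_⟩
  unfold chi
  split <;> simp

lemma chi_nonneg (n : ℕ → ℕ) (q : ℕ) : 0 ≤ chi n q := by
  unfold chi; split <;> norm_num

lemma chi_le_one (n : ℕ → ℕ) (q : ℕ) : chi n q ≤ 1 := by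
  unfold chi; split <;> norm_num

lemma chi_eq_one {n : ℕ → ℕ} {q : ℕ} (h : ∃ k, n k = q) : chi n q = 1 := by
  unfold chi; split <;> first | rfl | exact absurd h ‹_›

lemma chi_eq_zero {n : ℕ → ℕ} {q : ℕ} (h : ¬ ∃ k, n k = q) : chi n q = 0 := by
  unfold chi; split <;> first | exact absurd ‹_› h | rfl

open scoped Classical in
lemma windowCount_eq_card (n : ℕ → ℕ) (hn : StrictMono n) (i len : ℕ) :
    windowCount n i len =
      (Finset.filter (fun q => ∃ k, n k = i + q) (Finset.range len)).card := by
  classical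
  rw [windowCount]
  have hinj : Set.InjOn (fun k => n k - i) {k : ℕ | i ≤ n k ∧ n k < i + len} := by
    intro u hu v hv huv
    apply hn.injective
    have h1 : i ≤ n u := hu.1
    have h2 : i ≤ n v := hv.1
    simp only at huv
    omega
  have himg : (fun k => n k - i) '' {k : ℕ | i ≤ n k ∧ n k < i + len} =
      ↑(Finset.filter (fun q => ∃ k, n k = i + q) (Finset.range len)) := by
    ext q
    simp only [Set.mem_image, Set.mem_setOf_eq, Finset.coe_filter, Finset.mem_range]
    constructor
    · rintro ⟨k, ⟨h1, h2⟩, rfl⟩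
      exact ⟨by omega, k, by omega⟩
    · rintro ⟨hq, k, hk⟩
      exact ⟨k, ⟨by omega, by omega⟩, by omega⟩
  calc {k : ℕ | i ≤ n k ∧ n k < i + len}.ncard
      = ((fun k => n k - i) '' {k : ℕ | i ≤ n k ∧ n k < i + len}).ncard :=
        (Set.ncard_image_of_injOn hinj).symm
    _ = _ := by rw [himg, Set.ncard_coe_finset]

lemma windowCount_le (n : ℕ → ℕ) (hn : StrictMono n) (i len : ℕ) :
    windowCount n i len ≤ len := by
  classical
  rw [windowCount_eq_card n hn]
  calc (Finset.filter _ (Finset.range len)).card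
      ≤ (Finset.range len).card := Finset.card_filter_le _ _
    _ = len := Finset.card_range len

lemma sum_chi_eq_windowCount (n : ℕ → ℕ) (hn : StrictMono n) (i len : ℕ) :
    ∑ k ∈ Finset.range len, chi n (i + k) = (windowCount n i len : ℝ) := by
  classical
  rw [windowCount_eq_card n hn]
  simp only [chi]
  rw [Finset.sum_boole]

/-- A Banach limit of an indicator sequence is at most the sup window average. -/
lemma BL_chi_le {L : (ℕ → ℝ) → ℝ} (hL : IsBanachLimit L) {n : ℕ → ℕ}
    (hn : StrictMono n) {len : ℕ} (hlen : 1 ≤ len) :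
    L (chi n) ≤ ⨆ i : ℕ, (windowCount n i len : ℝ) / len := by
  have hlen' : (0 : ℝ) < len := by exact_mod_cast hlen
  set M := ⨆ i : ℕ, (windowCount n i len : ℝ) / len with hM
  have hbdd : BddAbove (Set.range fun i : ℕ => (windowCount n i len : ℝ) / len) := by
    refine ⟨1, ?_⟩
    rintro r ⟨i, rfl⟩
    rw [div_le_one hlen']
    exact_mod_cast windowCount_le n hn i len
  have hle : ∀ i : ℕ, (windowCount n i len : ℝ) / len ≤ M :=
    fun i => le_ciSup hbdd i
  have hsum : L (fun i => ∑ k ∈ Finset.range len, chi n (i + k)) = len * L (chi n) :=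
    BL_window_sum hL (chi_bdd n) len
  have hub : ∀ i : ℕ, (∑ k ∈ Finset.range len, chi n (i + k)) ≤ M * len := by
    intro i
    rw [sum_chi_eq_windowCount n hn]
    have := hle i
    calc (windowCount n i len : ℝ) = ((windowCount n i len : ℝ) / len) * len := by
          field_simp
      _ ≤ M * len := by nlinarith
  have h2 : L (fun i => ∑ k ∈ Finset.range len, chi n (i + k)) ≤ M * len :=
    BL_le_const hL (isBddSeq_sum _ _ fun k _ => isBddSeq_shift (chi_bdd n) k) hub
  rw [hsum, mul_comm M len] at h2
  exact le_of_mul_le_mul_left h2 hlen'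

/-- A Banach limit of an indicator sequence is at least the inf window average. -/
lemma BL_chi_ge {L : (ℕ → ℝ) → ℝ} (hL : IsBanachLimit L) {n : ℕ → ℕ}
    (hn : StrictMono n) {len : ℕ} (hlen : 1 ≤ len) :
    (⨅ i : ℕ, (windowCount n i len : ℝ) / len) ≤ L (chi n) := by
  have hlen' : (0 : ℝ) < len := by exact_mod_cast hlen
  set M := ⨅ i : ℕ, (windowCount n i len : ℝ) / len with hM
  have hbdd : BddBelow (Set.range fun i : ℕ => (windowCount n i len : ℝ) / len) := by
    refine ⟨0, ?_⟩
    rintro r ⟨i, rfl⟩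
    positivity
  have hle : ∀ i : ℕ, M ≤ (windowCount n i len : ℝ) / len :=
    fun i => ciInf_le hbdd i
  have hsum : L (fun i => ∑ k ∈ Finset.range len, chi n (i + k)) = len * L (chi n) :=
    BL_window_sum hL (chi_bdd n) len
  have hub : ∀ i : ℕ, M * len ≤ (∑ k ∈ Finset.range len, chi n (i + k)) := by
    intro i
    rw [sum_chi_eq_windowCount n hn]
    have h := hle i
    calc M * len ≤ ((windowCount n i len : ℝ) / len) * len := by nlinarith
      _ = (windowCount n i len : ℝ) := by field_simp
  have h2 : M * len ≤ L (fun i => ∑ k ∈ Finset.range len, chi n (i + k)) :=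
    BL_const_le hL (isBddSeq_sum _ _ fun k _ => isBddSeq_shift (chi_bdd n) k) hub
  rw [hsum, mul_comm M len] at h2
  exact le_of_mul_le_mul_left h2 hlen'

/-- If the upper and lower weights of a subsequence coincide, every Banach limit sends
its indicator sequence to that common value. -/
lemma BL_chi_eq {L : (ℕ → ℝ) → ℝ} (hL : IsBanachLimit L) {n : ℕ → ℕ}
    (hn : StrictMono n) {v : ℝ} (hup : upperWeight n = v) (hlow : lowerWeight n = v) :
    L (chi n) = v := by
  have hboundedAbove : IsBoundedUnder (· ≤ ·) atTop
      (fun len : ℕ => ⨆ i : ℕ, (windowCount n i len : ℝ) / len) := by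
    refine Filter.isBoundedUnder_of ⟨1, fun len => ?_⟩
    refine Real.iSup_le (fun i => ?_) zero_le_one
    rcases Nat.eq_zero_or_pos len with h | h
    · simp [h]
    · rw [div_le_one (by exact_mod_cast h)]
      exact_mod_cast windowCount_le n hn i len
  have hboundedBelow : IsBoundedUnder (· ≥ ·) atTop
      (fun len : ℕ => ⨅ i : ℕ, (windowCount n i len : ℝ) / len) := by
    refine Filter.isBoundedUnder_of ⟨0, fun len => ?_⟩
    refine le_ciInf fun i => ?_
    positivity
  have hle : L (chi n) ≤ v := by
    rw [← hup, upperWeight]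
    refine le_limsup_of_frequently_le ?_ hboundedAbove
    refine (Filter.eventually_atTop.2 ⟨1, fun len hlen => ?_⟩).frequently
    exact BL_chi_le hL hn hlen
  have hge : v ≤ L (chi n) := by
    rw [← hlow, lowerWeight]
    refine liminf_le_of_frequently_le ?_ hboundedBelow
    refine (Filter.eventually_atTop.2 ⟨1, fun len hlen => ?_⟩).frequently
    exact BL_chi_ge hL hn hlen
  linarith

/-- Along an essential subsequence, values of `x` at large indices in the range
are close to the sub-limit. -/
lemma near_on_range {x : ℕ → ℝ} {a : ℝ} {n : ℕ → ℕ} (hn : StrictMono n)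
    (ht : Tendsto (fun k => x (n k)) atTop (nhds a)) {ε : ℝ} (hε : 0 < ε) :
    ∃ N : ℕ, ∀ q ≥ N, (∃ k, n k = q) → |x q - a| < ε := by
  obtain ⟨K, hK⟩ := (Metric.tendsto_atTop.1 ht) ε hε
  refine ⟨n K, fun q hq hqr => ?_⟩
  obtain ⟨k, rfl⟩ := hqr
  have hkK : K ≤ k := hn.le_iff_le.mp hq
  have := hK k hkK
  rwa [Real.dist_eq] at this

/-- If the sub-limit set of a bounded sequence `x` is finite,
`{a 0, …, a (m-1)}`, and the weight `w(a_j)` exists for each `j`, then `x` is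
almost convergent and every Banach limit of `x` equals `∑ a_j · w(a_j)`. -/
theorem almostConvergent_of_finite_subLimitSet_weights (x : ℕ → ℝ)
    (hx : IsBddSeq x) (m : ℕ) (a : Fin m → ℝ) (hinj : Function.Injective a)
    (hS : subLimitSet x = Set.range a) (w : Fin m → ℝ)
    (hw : ∀ j, HasSubLimitWeight x (a j) (w j)) :
    AlmostConvergent x ∧
      ∀ L : (ℕ → ℝ) → ℝ, IsBanachLimit L → L x = ∑ j, a j * w j := by
  classical
  choose nn hess hup hlow using hw
  have hmono : ∀ j, StrictMono (nn j) := fun j => (hess j).1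
  have htend : ∀ j, Tendsto (fun k => x (nn j k)) atTop (nhds (a j)) :=
    fun j => (hess j).2.1
  -- all but finitely many indices lie in the range of some `nn j`
  have hcover : {q : ℕ | ∀ j, ¬ ∃ k, nn j k = q}.Finite := by
    by_contra hinf
    have hinf' : (setOf fun q : ℕ => ∀ j, ¬ ∃ k, nn j k = q).Infinite := hinf
    set p := Nat.nth (fun q : ℕ => ∀ j, ¬ ∃ k, nn j k = q) with hp
    have hpmono : StrictMono p := Nat.nth_strictMono hinf'
    have hpmem : ∀ t, ∀ j, ¬ ∃ k, nn j k = p t :=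
      fun t => Nat.nth_mem_of_infinite hinf' t
    obtain ⟨C, hC⟩ := hx
    have hmem : ∀ t, x (p t) ∈ Set.Icc (-C) C := fun t => by
      have := abs_le.1 (hC (p t)); exact ⟨this.1, this.2⟩
    obtain ⟨b, -, φ, hφ, hbt⟩ :=
      tendsto_subseq_of_bounded (Metric.isBounded_Icc (-C) C) hmem
    have hbS : b ∈ subLimitSet x := ⟨p ∘ φ, hpmono.comp hφ, hbt⟩
    rw [hS] at hbS
    obtain ⟨j, hj⟩ := hbS
    have hfin := (hess j).2.2 (p ∘ φ) (hpmono.comp hφ) (hj ▸ hbt)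
    have huniv : {t : ℕ | ¬ ∃ k, nn j k = (p ∘ φ) t} = Set.univ :=
      Set.eq_univ_of_forall fun t => hpmem (φ t) j
    rw [huniv] at hfin
    exact Set.infinite_univ hfin
  -- the ranges of distinct `nn j` intersect in a finite set
  have hdisj : ∀ j j' : Fin m, j ≠ j' →
      {q : ℕ | (∃ k, nn j k = q) ∧ (∃ k, nn j' k = q)}.Finite := by
    intro j j' hne
    by_contra hinf
    replace hinf : {q : ℕ | (∃ k, nn j k = q) ∧ (∃ k, nn j' k = q)}.Infinite := hinf
    have hd : 0 < |a j - a j'| / 2 := by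
      have h1 : a j ≠ a j' := fun h => hne (hinj h)
      have h2 := abs_pos.2 (sub_ne_zero.2 h1)
      linarith
    obtain ⟨N1, hN1⟩ := near_on_range (hmono j) (htend j) hd
    obtain ⟨N2, hN2⟩ := near_on_range (hmono j') (htend j') hd
    obtain ⟨q, hqmem, hq⟩ := hinf.exists_gt (max N1 N2)
    have h1 := hN1 q (le_of_lt (lt_of_le_of_lt (le_max_left _ _) hq)) hqmem.1
    have h2 := hN2 q (le_of_lt (lt_of_le_of_lt (le_max_right _ _) hq)) hqmem.2
    have h3 := abs_sub (x q - a j') (x q - a j)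
    rw [show (x q - a j') - (x q - a j) = a j - a j' by ring] at h3
    linarith
  have key : ∀ L : (ℕ → ℝ) → ℝ, IsBanachLimit L → L x = ∑ j, a j * w j := by
    intro L hL
    have hsumbdd : IsBddSeq (fun q => ∑ j, a j * chi (nn j) q) :=
      isBddSeq_sum _ _ fun j _ => isBddSeq_smul (a j) (chi_bdd (nn j))
    have hybdd : IsBddSeq (fun q => x q - ∑ j, a j * chi (nn j) q) :=
      isBddSeq_sub hx hsumbdd
    have hsmall : ∀ ε : ℝ, 0 < ε → ∃ N, ∀ q ≥ N,
        |x q - ∑ j, a j * chi (nn j) q| ≤ ε := by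
      intro ε hε
      choose Nj hNj using fun j => near_on_range (hmono j) (htend j) hε
      have hEfin : ({q : ℕ | ∀ j, ¬ ∃ k, nn j k = q} ∪
          ⋃ j : Fin m, ⋃ j' : Fin m, ⋃ _ : j ≠ j',
            {q : ℕ | (∃ k, nn j k = q) ∧ (∃ k, nn j' k = q)}).Finite := by
        refine hcover.union ?_
        exact Set.finite_iUnion fun j => Set.finite_iUnion fun j' =>
          Set.finite_iUnion fun hne => hdisj j j' hne
      obtain ⟨B, hB⟩ := hEfin.bddAbove
      refine ⟨max (B + 1) (Finset.univ.sup Nj), fun q hq => ?_⟩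
      have hqB : B + 1 ≤ q := le_trans (le_max_left _ _) hq
      have hqE : q ∉ ({q : ℕ | ∀ j, ¬ ∃ k, nn j k = q} ∪
          ⋃ j : Fin m, ⋃ j' : Fin m, ⋃ _ : j ≠ j',
            {q : ℕ | (∃ k, nn j k = q) ∧ (∃ k, nn j' k = q)}) := by
        intro hmem
        have := hB hmem
        omega
      have h1 : ¬ (∀ j, ¬ ∃ k, nn j k = q) := fun h => hqE (Or.inl h)
      push_neg at h1
      obtain ⟨j, hj⟩ := h1
      have huniq : ∀ j' : Fin m, j' ≠ j → ¬ ∃ k, nn j' k = q := by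
        intro j' hne hc
        exact hqE (Or.inr (Set.mem_iUnion.2 ⟨j', Set.mem_iUnion.2 ⟨j,
          Set.mem_iUnion.2 ⟨hne, hc, hj⟩⟩⟩))
      have hsum : (∑ j' : Fin m, a j' * chi (nn j') q) = a j := by
        rw [Finset.sum_eq_single j]
        · rw [chi_eq_one hj, mul_one]
        · intro j' _ hne
          rw [chi_eq_zero (huniq j' hne), mul_zero]
        · intro h; exact absurd (Finset.mem_univ j) h
      rw [hsum]
      have hqN : Nj j ≤ q :=
        le_trans (le_trans (Finset.le_sup (Finset.mem_univ j)) (le_max_right _ _)) hq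
      exact le_of_lt (hNj j q hqN hj)
    have hy0 : L (fun q => x q - ∑ j, a j * chi (nn j) q) = 0 :=
      BL_zero_of_small hL hybdd hsmall
    have hadd := BL_add hL hybdd hsumbdd
    have hxeq : (fun q => (x q - ∑ j, a j * chi (nn j) q) +
        (fun q' => ∑ j, a j * chi (nn j) q') q) = x := by
      funext q; simp
    rw [hxeq] at hadd
    rw [hadd, hy0, zero_add]
    have hsplit := BL_sum hL Finset.univ (fun j => fun q => a j * chi (nn j) q)
      (fun j _ => isBddSeq_smul (a j) (chi_bdd (nn j)))
    rw [hsplit]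
    refine Finset.sum_congr rfl fun j _ => ?_
    rw [BL_smul hL (a j) (chi_bdd (nn j)),
      BL_chi_eq hL (hmono j) (hup j) (hlow j)]
  exact ⟨⟨∑ j, a j * w j, key⟩, key⟩
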